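/- Let 𝒢 be a hereditary class with all forbidden induced subgraphs on at most c vertices, and let G be a forbidden induced subgraph for 𝒢^apex. Among all pairs of distinct subsets S, T ⊆ V(G) with G[S] and G[T] forbidden for 𝒢, choose one minimizing k = |S ∩ T|. Then |V(G)| ≤ (c−k)(k+2). -/

import Mathlib

open SimpleGraph

/-- A property of finite simple graphs. -/
abbrev GraphProp : Type 1 := ∀ (V : Type) [Finite V], SimpleGraph V → Prop

/-- A class of finite simple graphs: a property closed under isomorphism. -/
structure GraphClass : Type 1 where
  Mem : GraphProp
  iso_closed : ∀ (V W : Type) [Finite V] [Finite W] (G : SimpleGraph V) (H : SimpleGraph W),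
      Nonempty (G ≃g H) → Mem V G → Mem W H

/-- A property is hereditary if it is closed under taking induced subgraphs. -/
def Hereditary (P : GraphProp) : Prop :=
  ∀ (V : Type) [Finite V] (G : SimpleGraph V) (s : Set V), P V G → P s (G.induce s)

/-- `H` is a forbidden induced subgraph for `P`: it does not satisfy `P` but every
proper induced subgraph of it does. -/
def Forb (P : GraphProp) {V : Type} [Finite V] (H : SimpleGraph V) : Prop :=
  ¬ P V H ∧ ∀ s : Set V, s ≠ Set.univ → P s (H.induce s)

/-- Membership in the apex class of `𝒢`: graphs containing a vertex whose deletion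
lands in `𝒢` (together with the empty graph). -/
def ApexMem (𝒢 : GraphClass) : GraphProp :=
  fun V _ G => IsEmpty V ∨ ∃ v : V, 𝒢.Mem {u : V | u ≠ v} (G.induce {u : V | u ≠ v})

lemma nested_iso {V : Type} (G : SimpleGraph V) (A : Set V) (s : Set A) :
    Nonempty ((G.induce A).induce s ≃g G.induce (Subtype.val '' s)) := by
  refine ⟨⟨Equiv.Set.image _ s Subtype.val_injective, ?_⟩⟩
  rintro ⟨⟨a, hA⟩, ha⟩ ⟨⟨b, hB⟩, hb⟩
  simp [Equiv.Set.image, Equiv.Set.imageOfInjOn]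

lemma mem_of_subset {V : Type} [Finite V] (𝒢 : GraphClass) (hher : Hereditary 𝒢.Mem)
    (G : SimpleGraph V) {A B : Set V} (h : A ⊆ B) (hB : 𝒢.Mem B (G.induce B)) :
    𝒢.Mem A (G.induce A) := by
  have h1 := hher _ (G.induce B) (Subtype.val ⁻¹' A) hB
  have h2 : Subtype.val '' (Subtype.val ⁻¹' A : Set B) = A := by
    rw [Subtype.image_preimage_coe]
    exact Set.inter_eq_right.mpr h
  have h3 := nested_iso G B (Subtype.val ⁻¹' A)
  rw [h2] at h3
  exact 𝒢.iso_closed _ _ _ _ h3 h1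

lemma exists_forb {V : Type} [Finite V] (𝒢 : GraphClass)
    (G : SimpleGraph V) {A : Set V} (hA : ¬ 𝒢.Mem A (G.induce A)) :
    ∃ F ⊆ A, Forb 𝒢.Mem (G.induce F) := by
  classical
  obtain ⟨F, ⟨hFA, hFbad⟩, hminF⟩ := Set.Finite.exists_minimalFor Set.ncard
    {B : Set V | B ⊆ A ∧ ¬ 𝒢.Mem B (G.induce B)} (Set.toFinite _) ⟨A, le_refl A, hA⟩
  refine ⟨F, hFA, hFbad, ?_⟩
  intro s hs
  set B : Set V := Subtype.val '' s with hB
  have hBF : B ⊆ F := by rintro x ⟨y, _, rfl⟩; exact y.2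
  have hBne : B ≠ F := by
    intro hEq
    apply hs
    ext ⟨x, hx⟩
    simp only [Set.mem_univ, iff_true]
    have : x ∈ B := hEq ▸ hx
    obtain ⟨y, hy, hyx⟩ := this
    rwa [show (⟨x, hx⟩ : F) = y from Subtype.ext hyx.symm]
  have hlt : B.ncard < F.ncard := Set.ncard_lt_ncard (hBF.ssubset_of_ne hBne) (Set.toFinite _)
  have hBmem : 𝒢.Mem B (G.induce B) := by
    by_contra hbad
    have := hminF (j := B) ⟨hBF.trans hFA, hbad⟩ (le_of_lt hlt)
    omega
  exact 𝒢.iso_closed _ _ _ _ ⟨(Classical.choice (nested_iso G F s)).symm⟩ hBmem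

/-- With S, T a pair of distinct subsets inducing forbidden subgraphs for 𝒢 and
minimizing k = |S ∩ T|, we get |V(G)| ≤ (c − k)(k + 2). -/
theorem apex_forbidden_card_bound (𝒢 : GraphClass) (hher : Hereditary 𝒢.Mem) (c : ℕ)
    (hc : ∀ (V : Type) [Finite V] (H : SimpleGraph V), Forb 𝒢.Mem H → Nat.card V ≤ c)
    (V : Type) [Finite V] (G : SimpleGraph V) (hG : Forb (ApexMem 𝒢) G)
    (S T : Set V) (hST : S ≠ T)
    (hS : Forb 𝒢.Mem (G.induce S)) (hT : Forb 𝒢.Mem (G.induce T))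
    (hmin : ∀ S' T' : Set V, S' ≠ T' →
      Forb 𝒢.Mem (G.induce S') → Forb 𝒢.Mem (G.induce T') →
      Nat.card ↥(S ∩ T) ≤ Nat.card ↥(S' ∩ T')) :
    Nat.card V ≤ (c - Nat.card ↥(S ∩ T)) * (Nat.card ↥(S ∩ T) + 2) := by
  classical
  -- setup
  set k := Nat.card ↥(S ∩ T) with hkdef
  have hkn : k = (S ∩ T).ncard := Nat.card_coe_set_eq _
  have hGnot := hG.1
  rw [ApexMem] at hGnot
  push_neg at hGnot
  obtain ⟨hVne, hdel⟩ := hGnot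
  -- forbidden sets avoiding each vertex
  choose F hF1 hF2 using fun w : V => exists_forb 𝒢 G (hdel w)
  have hFnot : ∀ w : V, w ∉ F w := fun w hw => (hF1 w hw) rfl
  have hFc : ∀ w : V, (F w).ncard ≤ c := fun w => by
    rw [← Nat.card_coe_set_eq]; exact hc _ _ (hF2 w)
  have hSc : S.ncard ≤ c := by rw [← Nat.card_coe_set_eq]; exact hc _ _ hS
  have hTc : T.ncard ≤ c := by rw [← Nat.card_coe_set_eq]; exact hc _ _ hT
  -- one of S, T is nonempty, so c ≥ 1
  have hc1 : 1 ≤ c := by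
    have hNE : S.Nonempty ∨ T.Nonempty := by
      by_contra h
      push_neg at h
      exact hST (h.1.trans h.2.symm)
    rcases hNE with h | h
    · have := (Set.ncard_pos (Set.toFinite _)).mpr h; omega
    · have := (Set.ncard_pos (Set.toFinite _)).mpr h; omega
  -- trivial case: at most one vertex
  by_cases hV1 : Nat.card V ≤ 1
  · have hsub : Subsingleton V := Finite.card_le_one_iff_subsingleton.mp hV1
    have hempty : S ∩ T = ∅ := by
      by_contra h
      obtain ⟨x, hxS, hxT⟩ := Set.nonempty_iff_ne_empty.mpr h
      refine hST ?_
      ext y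
      have : y = x := Subsingleton.elim y x
      subst this
      simp [hxS, hxT]
    have hk0 : k = 0 := by rw [hkn, hempty, Set.ncard_empty]
    rw [hk0]
    omega
  -- main case
  push_neg at hV1
  -- minimality facts about F w for w ∈ S ∩ T
  have hkey : ∀ w ∈ S ∩ T, k + 1 ≤ (F w ∩ (S ∪ T)).ncard := by
    intro w hw
    have hwS : w ∈ S := hw.1
    have hwT : w ∈ T := hw.2
    have hFS : F w ≠ S := fun h => hFnot w (h ▸ hwS)
    have hFT : F w ≠ T := fun h => hFnot w (h ▸ hwT)
    have h1 : k ≤ (F w ∩ S).ncard := by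
      rw [← Nat.card_coe_set_eq]; exact hmin (F w) S hFS (hF2 w) hS
    have h2 : k ≤ (F w ∩ T).ncard := by
      rw [← Nat.card_coe_set_eq]; exact hmin (F w) T hFT (hF2 w) hT
    have hneq : F w ∩ S ≠ F w ∩ T := by
      intro hEq
      have hsub : F w ∩ S ⊆ S ∩ T := fun x hx => ⟨hx.2, (hEq ▸ hx).2⟩
      have hss : F w ∩ S ⊂ S ∩ T :=
        hsub.ssubset_of_ne (fun h => hFnot w ((h ▸ hw : w ∈ F w ∩ S)).1)
      have := Set.ncard_lt_ncard hss (Set.toFinite _)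
      omega
    have : ¬(F w ∩ S ⊆ F w ∩ T) ∨ ¬(F w ∩ T ⊆ F w ∩ S) := by
      by_contra h
      push_neg at h
      exact hneq (Set.Subset.antisymm h.1 h.2)
    rcases this with h | h
    · obtain ⟨x, hx1, hx2⟩ := Set.not_subset.mp h
      have hins : insert x (F w ∩ T) ⊆ F w ∩ (S ∪ T) := by
        rintro y (rfl | hy)
        · exact ⟨hx1.1, Or.inl hx1.2⟩
        · exact ⟨hy.1, Or.inr hy.2⟩
      have hcard : (insert x (F w ∩ T)).ncard = (F w ∩ T).ncard + 1 :=
        Set.ncard_insert_of_notMem hx2 (Set.toFinite _)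
      have := Set.ncard_le_ncard hins (Set.toFinite _)
      omega
    · obtain ⟨x, hx1, hx2⟩ := Set.not_subset.mp h
      have hins : insert x (F w ∩ S) ⊆ F w ∩ (S ∪ T) := by
        rintro y (rfl | hy)
        · exact ⟨hx1.1, Or.inr hx1.2⟩
        · exact ⟨hy.1, Or.inl hy.2⟩
      have hcard : (insert x (F w ∩ S)).ncard = (F w ∩ S).ncard + 1 :=
        Set.ncard_insert_of_notMem hx2 (Set.toFinite _)
      have := Set.ncard_le_ncard hins (Set.toFinite _)
      omega
  -- k + 1 ≤ c
  have hkc : k + 1 ≤ c := by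
    rcases (S ∩ T).eq_empty_or_nonempty with h | ⟨w, hw⟩
    · rw [hkn, h, Set.ncard_empty]; omega
    · have h1 := hkey w hw
      have h2 : (F w ∩ (S ∪ T)).ncard ≤ (F w).ncard :=
        Set.ncard_le_ncard Set.inter_subset_left (Set.toFinite _)
      have := hFc w
      omega
  -- bound on the "private part" of each F w
  have hBw : ∀ w ∈ S ∩ T, (F w \ (S ∪ T)).ncard ≤ c - (k + 1) := by
    intro w hw
    have hdiff : F w \ (S ∪ T) = F w \ (F w ∩ (S ∪ T)) := by
      ext x; simp only [Set.mem_diff, Set.mem_inter_iff, Set.mem_union]; tauto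
    have hsub : F w ∩ (S ∪ T) ⊆ F w := Set.inter_subset_left
    have := Set.ncard_diff hsub (Set.toFinite _)
    rw [hdiff, this]
    have := hkey w hw
    have := hFc w
    omega
  -- every vertex outside S ∪ T lies in some F w \ (S ∪ T) with w ∈ S ∩ T
  have hcov : ∀ u : V, u ∉ S ∪ T → ∃ w ∈ S ∩ T, u ∈ F w \ (S ∪ T) := by
    intro u hu
    set A : Set V := {x : V | x ≠ u} with hA
    have hAne : A ≠ Set.univ := by
      intro h
      have : u ∈ A := h ▸ Set.mem_univ u
      exact this rfl
    have happ := hG.2 A hAne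
    rcases happ with hemp | ⟨v, hv⟩
    · exfalso
      have : Nontrivial V := Finite.one_lt_card_iff_nontrivial.mp hV1
      obtain ⟨y, hy⟩ := exists_ne u
      exact hemp.false ⟨y, hy⟩
    · set B : Set V := Subtype.val '' {w : ↥A | w ≠ v} with hBdef
      have hBmem : 𝒢.Mem B (G.induce B) :=
        𝒢.iso_closed _ _ _ _ (nested_iso G A {w : ↥A | w ≠ v}) hv
      have hBchar : ∀ x : V, x ∈ B ↔ x ≠ u ∧ x ≠ (v : V) := by
        intro x
        constructor
        · rintro ⟨y, hy, rfl⟩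
          exact ⟨y.2, fun h => hy (Subtype.ext h)⟩
        · rintro ⟨h1, h2⟩
          exact ⟨⟨x, h1⟩, fun h => h2 (congrArg Subtype.val h), rfl⟩
      have hvS : (v : V) ∈ S := by
        by_contra hvs
        refine hS.1 (mem_of_subset 𝒢 hher G (fun x hx => ?_) hBmem)
        rw [hBchar]
        exact ⟨fun h => hu (Or.inl (h ▸ hx)), fun h => hvs (h ▸ hx)⟩
      have hvT : (v : V) ∈ T := by
        by_contra hvs
        refine hT.1 (mem_of_subset 𝒢 hher G (fun x hx => ?_) hBmem)
        rw [hBchar]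
        exact ⟨fun h => hu (Or.inr (h ▸ hx)), fun h => hvs (h ▸ hx)⟩
      refine ⟨(v : V), ⟨hvS, hvT⟩, ?_, hu⟩
      by_contra huF
      refine (hF2 (v : V)).1 (mem_of_subset 𝒢 hher G (fun x hx => ?_) hBmem)
      rw [hBchar]
      exact ⟨fun h => huF (h ▸ hx), fun h => hF1 (v : V) hx h⟩
  -- counting
  choose g hg1 hg2 using hcov
  haveI : Fintype V := Fintype.ofFinite V
  set Ufin : Finset V := Set.toFinset ((S ∪ T)ᶜ) with hUfin
  set Kfin : Finset V := Set.toFinset (S ∩ T) with hKfin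
  let f : V → V := fun u => if h : u ∉ S ∪ T then g u h else u
  have hmaps : ∀ u ∈ Ufin, f u ∈ Kfin := by
    intro u hu
    rw [hUfin, Set.mem_toFinset] at hu
    have hu' : u ∉ S ∪ T := hu
    rw [hKfin, Set.mem_toFinset]
    show (if h : u ∉ S ∪ T then g u h else u) ∈ S ∩ T
    rw [dif_pos hu']
    exact hg1 u hu'
  have hfib : ∀ w ∈ Kfin, (Ufin.filter (fun u => f u = w)).card ≤ c - (k + 1) := by
    intro w hw
    rw [hKfin, Set.mem_toFinset] at hw
    have hsubF : Ufin.filter (fun u => f u = w) ⊆ Set.toFinset (F w \ (S ∪ T)) := by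
      intro u hu
      rw [Finset.mem_filter] at hu
      obtain ⟨hu1, hu2⟩ := hu
      rw [hUfin, Set.mem_toFinset] at hu1
      rw [Set.mem_toFinset]
      have hu1' : u ∉ S ∪ T := hu1
      rw [show f u = (if h : u ∉ S ∪ T then g u h else u) from rfl, dif_pos hu1'] at hu2
      exact hu2 ▸ hg2 u hu1'
    calc (Ufin.filter (fun u => f u = w)).card ≤ (Set.toFinset (F w \ (S ∪ T))).card :=
          Finset.card_le_card hsubF
      _ = (F w \ (S ∪ T)).ncard := (Set.ncard_eq_toFinset_card' _).symm
      _ ≤ c - (k + 1) := hBw w hw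
  have hUcard : Ufin.card ≤ (c - (k + 1)) * Kfin.card :=
    Finset.card_le_mul_card_image_of_maps_to hmaps _ hfib
  have hKcard : Kfin.card = k := by
    rw [hKfin, hkn, Set.ncard_eq_toFinset_card']
  have hUT : (S ∪ T).ncard + k = S.ncard + T.ncard := by
    rw [hkn]; exact Set.ncard_union_add_ncard_inter S T
  have hVcard : Nat.card V ≤ Ufin.card + (S ∪ T).ncard := by
    rw [Nat.card_eq_fintype_card]
    have h1 : Ufin = (Set.toFinset (S ∪ T))ᶜ := by
      ext x; simp [hUfin]
    have h2 : (Set.toFinset (S ∪ T)).card = (S ∪ T).ncard := (Set.ncard_eq_toFinset_card' _).symm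
    rw [h1, Finset.card_compl, h2]
    have := Finset.card_le_univ (Set.toFinset (S ∪ T))
    rw [h2] at this
    omega
  -- final arithmetic
  obtain ⟨d, hd⟩ : ∃ d, c = k + 1 + d := ⟨c - (k + 1), by omega⟩
  have hck : c - k = d + 1 := by omega
  have hckk : c - (k + 1) = d := by omega
  rw [hck]
  have hfinal : Nat.card V ≤ d * k + (k + 2 + 2 * d) := by
    rw [hckk, hKcard] at hUcard
    omega
  have hring : (d + 1) * (k + 2) = d * k + (k + 2 + 2 * d) := by ring
  omega
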